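/- For every natural number n, the set of tuples (x_1,…,x_n) ∈ ℂ^n satisfying the polynomial identity (X−x_1)(X−x_2)⋯(X−x_n) = X^n + x_1 X^{n−1} + x_2 X^{n−2} + ⋯ + x_{n−1} X + x_n in ℂ[X] is finite. -/

import Mathlib

namespace UlamAux

variable {n : ℕ} (S : Set (Fin n → ℂ))

/-- The `i`-th coordinate function on `S`. -/
def phi (i : Fin n) : ↥S → ℂ := fun s => s.1 i

/-- The monomial function with exponent vector `α`. -/
def mono (α : Fin n → ℕ) : ↥S → ℂ := fun s => ∏ m, s.1 m ^ α m

/-- The exponent vector supported at `i` with value `k`. -/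
def ov (i : Fin n) (k : ℕ) : Fin n → ℕ := fun m => if m = i then k else 0

/-- Span of the monomial functions with all exponents `< n`. -/
noncomputable def W : Submodule ℂ (↥S → ℂ) :=
  Submodule.span ℂ (Set.range fun b : Fin n → Fin n => mono S fun m => (b m : ℕ))

lemma mono_add (α β : Fin n → ℕ) : mono S (α + β) = mono S α * mono S β := by
  funext s
  simp [mono, pow_add, Finset.prod_mul_distrib]

lemma mono_ov (i : Fin n) (k : ℕ) : mono S (ov i k) = phi S i ^ k := by
  funext s
  simp only [mono, ov, Pi.pow_apply, phi]
  rw [Finset.prod_eq_single i (fun b _ hb => by simp [hb]) (by simp)]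
  simp

lemma sum_ov (i : Fin n) (k : ℕ) (t : Finset (Fin n)) :
    ∑ m ∈ t, ov i k m = if i ∈ t then k else 0 := by
  simp [ov, Finset.sum_ite_eq' t i fun _ => k]

lemma findim_W : FiniteDimensional ℂ (W S) :=
  FiniteDimensional.span_of_finite ℂ (Set.finite_range _)

lemma key (hn : 0 < n)
    (hrel : ∀ i : Fin n,
      phi S i ^ n = -∑ j : Fin n, phi S j * phi S i ^ (n - ((j : ℕ) + 1))) :
    ∀ d e (α : Fin n → ℕ), (∑ m, α m ≤ d) →
      (∑ m ∈ Finset.univ.erase (⟨0, hn⟩ : Fin n), α m ≤ e) → mono S α ∈ W S := by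
  intro d
  induction d using Nat.strong_induction_on with
  | _ d ihd =>
  intro e
  induction e using Nat.strong_induction_on with
  | _ e ihe =>
  intro α hd he
  by_cases hsmall : ∀ m, α m < n
  · exact Submodule.subset_span ⟨fun m => ⟨α m, hsmall m⟩, rfl⟩
  push_neg at hsmall
  obtain ⟨i, hi⟩ := hsmall
  set i0 : Fin n := ⟨0, hn⟩ with hi0
  have hv0 : (i0 : ℕ) = 0 := rfl
  set α' : Fin n → ℕ := fun m => if m = i then α m - n else α m with hα'
  have hdecomp : α = α' + ov i n := by
    funext m
    simp only [Pi.add_apply, hα', ov]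
    by_cases h : m = i <;> simp [h] <;> omega
  set β : Fin n → Fin n → ℕ := fun j => α' + ov j 1 + ov i (n - ((j : ℕ) + 1)) with hβ
  have hmonoβ : ∀ j, mono S (β j) =
      mono S α' * (phi S j * phi S i ^ (n - ((j : ℕ) + 1))) := by
    intro j
    rw [hβ]
    simp only [mono_add, mono_ov, pow_one]
    ring
  have hiden : mono S α = -∑ j : Fin n, mono S (β j) := by
    calc mono S α = mono S α' * (phi S i ^ n) := by
          rw [hdecomp, mono_add, mono_ov]
    _ = mono S α' * (-∑ j : Fin n, phi S j * phi S i ^ (n - ((j : ℕ) + 1))) := by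
          rw [hrel i]
    _ = -∑ j : Fin n, mono S α' * (phi S j * phi S i ^ (n - ((j : ℕ) + 1))) := by
          rw [mul_neg, Finset.mul_sum]
    _ = -∑ j : Fin n, mono S (β j) := by
          rw [Finset.sum_congr rfl fun j _ => (hmonoβ j).symm]
  have hsumα' : ∑ m, α' m + n = ∑ m, α m := by
    conv_rhs => rw [hdecomp]
    simp only [Pi.add_apply, Finset.sum_add_distrib, sum_ov]
    simp
  have hsumβ : ∀ j : Fin n, ∑ m, β j m = ∑ m, α' m + 1 + (n - ((j : ℕ) + 1)) := by
    intro j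
    simp only [hβ, Pi.add_apply, Finset.sum_add_distrib, sum_ov]
    simp
  have hjle : ∀ j : Fin n, (j : ℕ) + 1 ≤ n := fun j => j.isLt
  have houter : ∀ j : Fin n, j ≠ i0 → mono S (β j) ∈ W S := by
    intro j hj
    have hjpos : 1 ≤ (j : ℕ) := by
      rcases Nat.eq_zero_or_pos (j : ℕ) with h | h
      · exact absurd (Fin.ext h : j = i0) hj
      · exact h
    have hlt : ∑ m, β j m < d := by
      have h1 := hsumβ j
      have h2 := hjle j
      omega
    refine ihd _ hlt (∑ m, β j m) (β j) le_rfl ?_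
    exact Finset.sum_le_sum_of_subset (Finset.erase_subset _ _)
  by_cases hii0 : i = i0
  · -- halving case: the term j = i0 reproduces `mono S α`
    have hβ0 : β i0 = α := by
      funext m
      show α' m + ov i0 1 m + ov i (n - ((i0 : ℕ) + 1)) m = α m
      rw [hv0, ← hii0]
      simp only [hα', ov]
      by_cases h : m = i <;> simp [h] <;> omega
    have hsplit : ∑ j : Fin n, mono S (β j)
        = mono S (β i0) + ∑ j ∈ Finset.univ.erase i0, mono S (β j) :=
      (Finset.add_sum_erase _ _ (Finset.mem_univ i0)).symm
    have hSig : ∑ j ∈ Finset.univ.erase i0, mono S (β j) ∈ W S :=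
      Submodule.sum_mem _ fun j hj => houter j (Finset.ne_of_mem_erase hj)
    have h2 : (2 : ℂ) • mono S α = -∑ j ∈ Finset.univ.erase i0, mono S (β j) := by
      rw [two_smul]
      have h := hiden
      rw [hsplit, hβ0] at h
      linear_combination h
    have hfin : mono S α = (2⁻¹ : ℂ) • ((2 : ℂ) • mono S α) := by
      rw [smul_smul]; norm_num
    rw [hfin, h2]
    exact Submodule.smul_mem _ _ (Submodule.neg_mem _ hSig)
  · -- i ≠ i0
    rw [hiden]
    refine Submodule.neg_mem _ (Submodule.sum_mem _ fun j _ => ?_)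
    by_cases hj : j = i0
    · subst hj
      -- use inner induction: degree away from i0 drops
      have hptwise : ∀ m, β i0 m + ov i 1 m = α m + ov i0 1 m := by
        intro m
        show α' m + ov i0 1 m + ov i (n - ((i0 : ℕ) + 1)) m + ov i 1 m
            = α m + ov i0 1 m
        rw [hv0]
        simp only [hα', ov]
        have hii0' : i0 ≠ i := fun hh => hii0 hh.symm
        by_cases h1 : m = i <;> by_cases h2 : m = i0 <;>
          simp [h1, h2, hii0, hii0'] <;> omega
      have hsum1 : ∑ m ∈ Finset.univ.erase i0, β i0 m + 1
          = ∑ m ∈ Finset.univ.erase i0, α m := by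
        have hs : ∑ m ∈ Finset.univ.erase i0, (β i0 m + ov i 1 m)
            = ∑ m ∈ Finset.univ.erase i0, (α m + ov i0 1 m) :=
          Finset.sum_congr rfl fun m _ => hptwise m
        rw [Finset.sum_add_distrib, Finset.sum_add_distrib, sum_ov, sum_ov] at hs
        have himem : i ∈ Finset.univ.erase i0 :=
          Finset.mem_erase.mpr ⟨hii0, Finset.mem_univ i⟩
        have hi0mem : i0 ∉ Finset.univ.erase i0 := Finset.notMem_erase _ _
        rw [if_pos himem, if_neg hi0mem] at hs
        omega
      have htot : ∑ m, β i0 m ≤ d := by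
        have h1 := hsumβ i0
        rw [hv0] at h1
        omega
      have helt : ∑ m ∈ Finset.univ.erase i0, β i0 m < e := by omega
      exact ihe _ helt (β i0) htot le_rfl
    · exact houter j hj


lemma aeval_apply (i : Fin n) (p : Polynomial ℂ) (s : ↥S) :
    (Polynomial.aeval (phi S i) p) s = p.eval (s.1 i) := by
  have h := Polynomial.aeval_algHom_apply
    (Pi.evalAlgHom ℂ (fun _ : ↥S => ℂ) s) (phi S i) p
  simp only [Pi.evalAlgHom_apply] at h
  rw [← h, phi, Polynomial.aeval_def, Polynomial.eval]
  simp [Polynomial.eval₂_eq_eval_map]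

lemma algebraic (hn : 0 < n)
    (hrel : ∀ i : Fin n,
      phi S i ^ n = -∑ j : Fin n, phi S j * phi S i ^ (n - ((j : ℕ) + 1)))
    (i : Fin n) :
    ∃ q : Polynomial ℂ, q ≠ 0 ∧ ∀ s : ↥S, q.eval (s.1 i) = 0 := by
  haveI := findim_W S
  have hpow : ∀ k : ℕ, phi S i ^ k ∈ W S := by
    intro k
    rw [← mono_ov]
    refine key S hn hrel k k (ov i k) ?_ ?_
    · rw [sum_ov]; simp
    · refine le_trans (Finset.sum_le_sum_of_subset (Finset.erase_subset _ _)) ?_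
      rw [sum_ov]; simp
  have hmem : ∀ q : Polynomial ℂ, (Polynomial.aeval (phi S i)) q ∈ W S := by
    intro q
    rw [Polynomial.aeval_eq_sum_range]
    exact Submodule.sum_mem _ fun k _ => Submodule.smul_mem _ _ (hpow k)
  set L : Polynomial ℂ →ₗ[ℂ] ↥(W S) :=
    LinearMap.codRestrict (W S) (Polynomial.aeval (phi S i)).toLinearMap hmem with hL
  have hni : ¬ Function.Injective L := by
    intro hinj
    haveI : FiniteDimensional ℂ (Polynomial ℂ) :=
      FiniteDimensional.of_injective L hinj
    exact Polynomial.not_finite (R := ℂ) inferInstance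
  obtain ⟨q1, q2, hq12, hne⟩ := Function.not_injective_iff.mp hni
  have h0 : Polynomial.aeval (phi S i) (q1 - q2) = 0 := by
    have h1 : (L q1 : ↥S → ℂ) = L q2 := congrArg Subtype.val hq12
    simp only [hL, LinearMap.codRestrict_apply, AlgHom.toLinearMap_apply] at h1
    rw [map_sub]; exact sub_eq_zero.mpr h1
  refine ⟨q1 - q2, sub_ne_zero.mpr hne, fun s => ?_⟩
  have := congrArg (fun f : ↥S → ℂ => f s) h0
  simpa [aeval_apply, phi] using this

end UlamAux

open Polynomial in
/-- The set of tuples `(x_1, …, x_n) ∈ ℂ^n` with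
`(X - x_1)⋯(X - x_n) = X^n + x_1 X^(n-1) + ⋯ + x_(n-1) X + x_n` is finite. -/
theorem ulam_root_tuples_finite (n : ℕ) :
    {x : Fin n → ℂ | ∏ i : Fin n, (X - C (x i)) =
      X ^ n + ∑ j : Fin n, C (x j) * X ^ (n - ((j : ℕ) + 1))}.Finite := by
  rcases Nat.eq_zero_or_pos n with h0 | hn
  · subst h0
    apply Set.Subsingleton.finite
    intro a _ b _
    funext m
    exact Fin.elim0 m
  set S : Set (Fin n → ℂ) := {x : Fin n → ℂ | ∏ i : Fin n, (X - C (x i)) =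
      X ^ n + ∑ j : Fin n, C (x j) * X ^ (n - ((j : ℕ) + 1))} with hS
  have hrel : ∀ i : Fin n,
      UlamAux.phi S i ^ n
        = -∑ j : Fin n, UlamAux.phi S j * UlamAux.phi S i ^ (n - ((j : ℕ) + 1)) := by
    intro i
    funext s
    obtain ⟨x, hx⟩ := s
    have hx' : ∏ i : Fin n, (X - C (x i)) =
        X ^ n + ∑ j : Fin n, C (x j) * X ^ (n - ((j : ℕ) + 1)) := hx
    have hL : Polynomial.eval (x i) (∏ k : Fin n, (X - C (x k))) = 0 := by
      rw [Polynomial.eval_prod]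
      exact Finset.prod_eq_zero (Finset.mem_univ i) (by simp)
    have hR : Polynomial.eval (x i)
        (X ^ n + ∑ j : Fin n, C (x j) * X ^ (n - ((j : ℕ) + 1)))
        = x i ^ n + ∑ j : Fin n, x j * x i ^ (n - ((j : ℕ) + 1)) := by
      simp [Polynomial.eval_finset_sum]
    have h1 := congrArg (Polynomial.eval (x i)) hx'
    rw [hL, hR] at h1
    have h2 : x i ^ n = -∑ j : Fin n, x j * x i ^ (n - ((j : ℕ) + 1)) :=
      eq_neg_of_add_eq_zero_left h1.symm
    simpa [UlamAux.phi] using h2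
  choose q hq0 hq using fun i => UlamAux.algebraic S hn hrel i
  refine Set.Finite.subset (Set.Finite.pi fun i =>
    Polynomial.finite_setOf_isRoot (hq0 i)) ?_
  intro x hx
  rw [Set.mem_pi]
  intro i _
  exact hq i ⟨x, hx⟩
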